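/- arXiv:2602.20917 — 2 statements merged into one kernel-verified Lean document; each statement's English description precedes it below -/
import Mathlib

section
/- Let n be a squarefree positive integer and set S(n) := Σ_{d | n, d² < n} μ(d). Then: (i) if μ(n) = 1 then S(n) = 0; (ii) if n is prime then S(n) = 1; (iii) if n has a prime factor p with p² > n and p < n, then S(n) = 0; (iv) if n = p1·p2·p3 with primes p3 < p2 < p1 and p1² < n, then S(n) = −2; (v) if Ω(n) = 7 and P⁻(n)^8 > n (every prime factor of n exceeds n^{1/8}), then S(n) = −20. -/
/-- `Smu n = ∑_{d ∣ n, d < √n} μ(d)`, where the condition `d < √n` is rendered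
as `d² < n`. -/
def Smu (n : ℕ) : ℤ :=
  ∑ d ∈ n.divisors.filter (fun d => d ^ 2 < n), ArithmeticFunction.moebius d

section Helpers
open Finset Nat ArithmeticFunction
open scoped ArithmeticFunction.Moebius ArithmeticFunction.Omega ArithmeticFunction.omega ArithmeticFunction.zeta

lemma keyA (n K : ℕ) (hn : 0 < n) (hsq : Squarefree n)
    (h : ∀ d ∈ n.divisors, (d ^ 2 < n ↔ Ω d ≤ K)) :
    Smu n = ∑ j ∈ range (n.primeFactors.card + 1),
      (if j ≤ K then (-1 : ℤ) ^ j * (n.primeFactors.card.choose j) else 0) := by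
  rw [Smu, Finset.filter_congr h, Finset.sum_filter,
    ← Nat.divisors_filter_squarefree_of_squarefree hsq,
    Nat.sum_divisors_filter_squarefree hn.ne' (f := fun d => if Ω d ≤ K then (μ d : ℤ) else 0),
    Nat.factors_eq]
  have htf : (↑n.primeFactorsList : Multiset ℕ).toFinset = n.primeFactors := by
    rw [List.toFinset_coe, Nat.toFinset_factors]
  rw [htf, Finset.sum_powerset]
  refine Finset.sum_congr rfl fun j hj => ?_
  have hsum : ∀ s ∈ Finset.powersetCard j n.primeFactors,
      (if Ω s.val.prod ≤ K then (μ s.val.prod : ℤ) else 0)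
        = (if j ≤ K then (-1 : ℤ) ^ j else 0) := by
    intro s hs
    obtain ⟨hsub, hcard⟩ := Finset.mem_powersetCard.mp hs
    have hm : s.val.prod = ∏ p ∈ s, p := by simp
    have hdvd : (∏ p ∈ s, p) ∣ n := by
      calc (∏ p ∈ s, p) ∣ ∏ p ∈ n.primeFactors, p :=
        Finset.prod_dvd_prod_of_subset _ _ _ hsub
      _ = n := Nat.prod_primeFactors_of_squarefree hsq
    have hsqd : Squarefree (∏ p ∈ s, p) := hsq.squarefree_of_dvd hdvd
    have hOm : Ω (∏ p ∈ s, p) = j := by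
      rw [← hm, ← hcard]
      rw [cardFactors_multiset_prod]
      · rw [Multiset.map_congr rfl
          (fun p hp => cardFactors_apply_prime (Nat.prime_of_mem_primeFactors (hsub hp))),
          Multiset.map_const', Multiset.sum_replicate, smul_eq_mul, mul_one]
        rfl
      · rw [hm]
        exact fun h0 => hn.ne' (by simpa [h0] using hdvd)
    rw [hm, hOm, moebius_apply_of_squarefree hsqd, hOm]
  rw [Finset.sum_congr rfl hsum, Finset.sum_const, Finset.card_powersetCard]
  rcases le_or_gt j K with hK | hK
  · simp [hK, mul_comm]
  · simp [Nat.not_le.mpr hK]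

lemma sum_moeb (n : ℕ) (h1 : n ≠ 1) : ∑ d ∈ n.divisors, (μ d : ℤ) = 0 := by
  have h2 : (μ * ζ : ArithmeticFunction ℤ) n = (1 : ArithmeticFunction ℤ) n := by
    rw [moebius_mul_coe_zeta]
  rwa [coe_mul_zeta_apply, one_apply, if_neg h1] at h2

lemma sq_ne (n d : ℕ) (hsq : Squarefree n) (h1 : n ≠ 1) (hd : d ∣ n) : d ^ 2 ≠ n := by
  intro h
  have : d * d ∣ n := by rw [← pow_two, h]
  have := Nat.isUnit_iff.mp (hsq d this)
  subst this
  simp at h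
  exact h1 h.symm

lemma mu_compl (n d e : ℕ) (hsq : Squarefree n) (hμ : μ n = 1) (h : n = d * e) :
    (μ e : ℤ) = μ d := by
  subst h
  have hcop : Nat.Coprime d e := Nat.coprime_of_squarefree_mul hsq
  have hmul : μ (d * e) = μ d * μ e := isMultiplicative_moebius.map_mul_of_coprime hcop
  rw [hμ] at hmul
  have hd : μ d = 1 ∨ μ d = -1 :=
    moebius_ne_zero_iff_eq_or.mp (moebius_ne_zero_iff_squarefree.mpr hsq.of_mul_left)
  rcases hd with h | h <;> rw [h] at hmul ⊢ <;> omega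

lemma div_mem_flip (n d : ℕ) (hn : 0 < n) (hsq : Squarefree n) (h1 : n ≠ 1)
    (hd : d ∈ n.divisors.filter (fun d => ¬ d ^ 2 < n)) :
    n / d ∈ n.divisors.filter (fun d => d ^ 2 < n) := by
  simp only [Finset.mem_filter, Nat.mem_divisors] at hd ⊢
  obtain ⟨⟨hdvd, _⟩, hlt⟩ := hd
  obtain ⟨e, he⟩ := hdvd
  have hd0 : 0 < d := Nat.pos_of_dvd_of_pos ⟨e, he⟩ hn
  have he0 : 0 < e := Nat.pos_of_ne_zero fun h => by simp [he, h] at hn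
  have hne : d * d ≠ n := fun h => sq_ne n d hsq h1 ⟨e, he⟩ (by rw [pow_two, h])
  have h2 : n ≤ d * d := by rw [← pow_two d]; exact Nat.not_lt.mp hlt
  have hgt : n < d * d := lt_of_le_of_ne h2 (Ne.symm hne)
  have hed : e < d := by
    by_contra hc
    push_neg at hc
    have : d * d ≤ d * e := Nat.mul_le_mul_left d hc
    omega
  have hnd : n / d = e := by rw [he, Nat.mul_div_cancel_left _ hd0]
  rw [hnd]
  refine ⟨⟨⟨d, by rw [he]; ring⟩, hn.ne'⟩, ?_⟩
  calc e ^ 2 = e * e := pow_two e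
  _ < e * d := by nlinarith
  _ = n := by rw [he]; ring

lemma div_mem_flip' (n e : ℕ) (hn : 0 < n) (hsq : Squarefree n) (h1 : n ≠ 1)
    (hd : e ∈ n.divisors.filter (fun d => d ^ 2 < n)) :
    n / e ∈ n.divisors.filter (fun d => ¬ d ^ 2 < n) := by
  simp only [Finset.mem_filter, Nat.mem_divisors] at hd ⊢
  obtain ⟨⟨hdvd, _⟩, hlt⟩ := hd
  obtain ⟨d, he⟩ := hdvd
  have he0 : 0 < e := Nat.pos_of_dvd_of_pos ⟨d, he⟩ hn
  have hd0 : 0 < d := Nat.pos_of_ne_zero fun h => by simp [he, h] at hn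
  have hed : e < d := by
    rw [pow_two, he] at hlt
    exact lt_of_mul_lt_mul_left hlt (Nat.zero_le e)
  have hnd : n / e = d := by rw [he, Nat.mul_div_cancel_left _ he0]
  rw [hnd]
  refine ⟨⟨⟨e, by rw [he]; ring⟩, hn.ne'⟩, ?_⟩
  push_neg
  calc n = e * d := he
  _ ≤ d * d := by nlinarith
  _ = d ^ 2 := (pow_two d).symm

lemma partI (n : ℕ) (hn : 0 < n) (hsq : Squarefree n) (hμ : μ n = 1) : Smu n = 0 := by
  rcases eq_or_ne n 1 with rfl | h1
  · simp [Smu, Finset.filter_singleton]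
  have key : ∑ d ∈ n.divisors.filter (fun d => ¬ d ^ 2 < n), (μ d : ℤ)
      = ∑ d ∈ n.divisors.filter (fun d => d ^ 2 < n), (μ d : ℤ) := by
    apply Finset.sum_nbij' (i := fun d => n / d) (j := fun e => n / e)
    · exact fun d hd => div_mem_flip n d hn hsq h1 hd
    · exact fun e he => div_mem_flip' n e hn hsq h1 he
    · intro d hd
      simp only [Finset.mem_filter, Nat.mem_divisors] at hd
      exact Nat.div_div_self hd.1.1 hn.ne'
    · intro e he
      simp only [Finset.mem_filter, Nat.mem_divisors] at he
      exact Nat.div_div_self he.1.1 hn.ne'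
    · intro d hd
      simp only [Finset.mem_filter, Nat.mem_divisors] at hd
      obtain ⟨e, he⟩ := hd.1.1
      have hd0 : 0 < d := Nat.pos_of_dvd_of_pos ⟨e, he⟩ hn
      have hnd : n / d = e := by rw [he, Nat.mul_div_cancel_left _ hd0]
      rw [hnd]
      exact (mu_compl n d e hsq hμ he).symm
  have htot := sum_moeb n h1
  rw [← Finset.sum_filter_add_sum_filter_not n.divisors (fun d => d ^ 2 < n)] at htot
  rw [Smu]
  linarith

lemma partII (n : ℕ) (hp : n.Prime) : Smu n = 1 := by
  rw [Smu, hp.divisors]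
  have h2 : 2 ≤ n := hp.two_le
  have : ({1, n} : Finset ℕ).filter (fun d => d ^ 2 < n) = {1} := by
    rw [Finset.filter_insert, if_pos (by nlinarith), Finset.filter_singleton,
      if_neg (by nlinarith)]
    rfl
  rw [this, Finset.sum_singleton, moebius_apply_one]

lemma partIII (n : ℕ) (hn : 0 < n) (h : ∃ p : ℕ, p.Prime ∧ p ∣ n ∧ n < p ^ 2 ∧ p < n) :
    Smu n = 0 := by
  obtain ⟨p, hp, ⟨m, hm⟩, hlt, hpn⟩ := h
  have hm0 : 0 < m := Nat.pos_of_ne_zero fun h => by simp [hm, h] at hn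
  have hmp : m < p := by nlinarith [hm ▸ hlt, pow_two p]
  have hset : n.divisors.filter (fun d => d ^ 2 < n) = m.divisors := by
    ext d
    simp only [Finset.mem_filter, Nat.mem_divisors]
    constructor
    · rintro ⟨⟨hdvd, _⟩, hdlt⟩
      refine ⟨?_, hm0.ne'⟩
      have hpd : ¬ p ∣ d := by
        intro hpd
        have : p ≤ d := Nat.le_of_dvd (Nat.pos_of_dvd_of_pos hdvd hn) hpd
        nlinarith [pow_two p, pow_two d]
      exact (Nat.Coprime.dvd_of_dvd_mul_left
        ((Nat.Prime.coprime_iff_not_dvd hp).mpr hpd).symm (hm ▸ hdvd))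
    · rintro ⟨hdvd, _⟩
      have hdm : d ≤ m := Nat.le_of_dvd hm0 hdvd
      refine ⟨⟨hm ▸ Dvd.dvd.mul_left hdvd p, hn.ne'⟩, ?_⟩
      calc d ^ 2 = d * d := pow_two d
      _ ≤ m * m := Nat.mul_le_mul hdm hdm
      _ < m * p := by nlinarith
      _ = n := by rw [hm]; ring
  rw [Smu, hset]
  apply sum_moeb
  intro h1
  rw [h1, mul_one] at hm
  omega

lemma omega_small (d : ℕ) (hd : d ≠ 0) (h : Ω d ≤ 1) : d = 1 ∨ d.Prime := by
  rcases Nat.eq_or_lt_of_le h with h1 | h0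
  · exact Or.inr (cardFactors_eq_one_iff_prime.mp h1)
  · left
    have : Ω d = 0 := by omega
    rw [cardFactors_apply, List.length_eq_zero_iff] at this
    rcases (Nat.primeFactorsList_eq_nil d).mp this with h | h
    · exact absurd h hd
    · exact h

lemma card_pf_eq_omega (n : ℕ) : n.primeFactors.card = ω n := by
  rw [cardDistinctFactors_apply, Nat.primeFactors, List.card_toFinset]

lemma partIV (n : ℕ) (hn : 0 < n) (hsq : Squarefree n) (p1 p2 p3 : ℕ)
    (hp1 : p1.Prime) (hp2 : p2.Prime) (hp3 : p3.Prime)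
    (h32 : p3 < p2) (h21 : p2 < p1) (hne : n = p1 * p2 * p3) (hlt : p1 ^ 2 < n) :
    Smu n = -2 := by
  have hple : ∀ q : ℕ, q.Prime → q ∣ n → q ≤ p1 := by
    intro q hq hqn
    rw [hne] at hqn
    rcases (Nat.Prime.dvd_mul hq).mp hqn with h | h
    · rcases (Nat.Prime.dvd_mul hq).mp h with h | h
      · exact ((Nat.prime_dvd_prime_iff_eq hq hp1).mp h).le
      · exact ((Nat.prime_dvd_prime_iff_eq hq hp2).mp h) ▸ h21.le
    · exact ((Nat.prime_dvd_prime_iff_eq hq hp3).mp h) ▸ (h32.trans h21).le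
  have hΩ : Ω n = 3 := by
    rw [hne, cardFactors_mul (Nat.mul_ne_zero hp1.ne_zero hp2.ne_zero) hp3.ne_zero,
      cardFactors_mul hp1.ne_zero hp2.ne_zero,
      cardFactors_apply_prime hp1, cardFactors_apply_prime hp2, cardFactors_apply_prime hp3]
  have key : ∀ d ∈ n.divisors, (d ^ 2 < n ↔ Ω d ≤ 1) := by
    intro d hd
    rw [Nat.mem_divisors] at hd
    obtain ⟨⟨e, he⟩, _⟩ := hd
    have hd0 : d ≠ 0 := fun h => hn.ne' (by simp [he, h])
    have he0 : e ≠ 0 := fun h => hn.ne' (by simp [he, h])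
    constructor
    · intro hsmall
      by_contra hc
      push_neg at hc
      have hΩe : Ω e ≤ 1 := by
        have := cardFactors_mul hd0 he0
        rw [← he, hΩ] at this
        omega
      have hep : e ≤ p1 := by
        rcases omega_small e he0 hΩe with h | h
        · omega
        · exact hple e h ⟨d, by rw [he]; ring⟩
      have hdp : p1 < d := by
        by_contra hdc
        push_neg at hdc
        have : n ≤ p1 * p1 := by
          calc n = d * e := he
          _ ≤ p1 * p1 := Nat.mul_le_mul hdc hep
        nlinarith [pow_two p1]
      have : n ≤ d ^ 2 := by
        calc n = d * e := he
        _ ≤ d * d := Nat.mul_le_mul_left d (by omega)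
        _ = d ^ 2 := (pow_two d).symm
      omega
    · intro hsmall
      rcases omega_small d hd0 hsmall with h | h
      · subst h; nlinarith [hp1.two_le]
      · have := hple d h ⟨e, he⟩
        nlinarith [pow_two d, pow_two p1]
  have hpf : n.primeFactors = {p1, p2, p3} := by
    rw [hne, Nat.primeFactors_mul (Nat.mul_ne_zero hp1.ne_zero hp2.ne_zero) hp3.ne_zero,
      Nat.primeFactors_mul hp1.ne_zero hp2.ne_zero,
      hp1.primeFactors, hp2.primeFactors, hp3.primeFactors]
    ext a; simp [or_assoc]
  have hcard : n.primeFactors.card = 3 := by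
    rw [hpf]
    rw [Finset.card_insert_of_notMem (by simp; omega),
      Finset.card_insert_of_notMem (by simp; omega), Finset.card_singleton]
  rw [keyA n 1 hn hsq key, hcard]
  norm_num [Finset.sum_range_succ, Nat.choose]

lemma prodlist (q : ℕ) (l : List ℕ) (h : ∀ p ∈ l, q ≤ p) : q ^ l.length ≤ l.prod := by
  induction l with
  | nil => simp
  | cons a t ih =>
      simp only [List.length_cons, List.prod_cons, pow_succ, pow_succ']
      exact Nat.mul_le_mul (h a (by simp)) (ih fun p hp => h p (by simp [hp]))

lemma minFac_pow_le (n m : ℕ) (hn : n ≠ 0) (hm : m ∣ n) :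
    n.minFac ^ (Ω m) ≤ m := by
  have hm0 : m ≠ 0 := fun h => hn (by simpa [h] using hm)
  calc n.minFac ^ (Ω m) = n.minFac ^ m.primeFactorsList.length := by rw [cardFactors_apply]
  _ ≤ m.primeFactorsList.prod := prodlist _ _ (fun p hp =>
      Nat.minFac_le_of_dvd (Nat.prime_of_mem_primeFactorsList hp).two_le
        ((Nat.dvd_of_mem_primeFactorsList hp).trans hm))
  _ = m := Nat.prod_primeFactorsList hm0

lemma partV (n : ℕ) (hn : 0 < n) (hsq : Squarefree n) (hΩ : Ω n = 7)
    (hq : n < n.minFac ^ 8) : Smu n = -20 := by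
  have h1 : n ≠ 1 := fun h => by rw [h] at hΩ; simp at hΩ
  set q := n.minFac with hqdef
  have hq2 : 2 ≤ q := (Nat.minFac_prime h1).two_le
  have key : ∀ d ∈ n.divisors, (d ^ 2 < n ↔ Ω d ≤ 3) := by
    intro d hd
    rw [Nat.mem_divisors] at hd
    obtain ⟨⟨e, he⟩, _⟩ := hd
    have hd0 : d ≠ 0 := fun h => hn.ne' (by simp [he, h])
    have he0 : e ≠ 0 := fun h => hn.ne' (by simp [he, h])
    have hΩde : Ω d + Ω e = 7 := by
      rw [← cardFactors_mul hd0 he0, ← he, hΩ]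
    constructor
    · intro hsmall
      by_contra hc
      push_neg at hc
      have hdge : q ^ 4 ≤ d := by
        calc q ^ 4 ≤ q ^ (Ω d) := Nat.pow_le_pow_right (by omega) hc
        _ ≤ d := minFac_pow_le n d hn.ne' ⟨e, he⟩
      have : n < d ^ 2 := by
        calc n < q ^ 8 := hq
        _ = (q ^ 4) ^ 2 := by ring
        _ ≤ d ^ 2 := Nat.pow_le_pow_left hdge 2
      omega
    · intro hsmall
      have hege : q ^ 4 ≤ e := by
        calc q ^ 4 ≤ q ^ (Ω e) := Nat.pow_le_pow_right (by omega) (by omega)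
        _ ≤ e := minFac_pow_le n e hn.ne' ⟨d, by rw [he]; ring⟩
      have hkey : d * q ^ 4 ≤ n := by
        calc d * q ^ 4 ≤ d * e := Nat.mul_le_mul_left d hege
        _ = n := he.symm
      have hsq8 : d ^ 2 * q ^ 8 ≤ n ^ 2 := by
        calc d ^ 2 * q ^ 8 = (d * q ^ 4) ^ 2 := by ring
        _ ≤ n ^ 2 := Nat.pow_le_pow_left hkey 2
      have hd1 : 0 < d ^ 2 := by positivity
      nlinarith
  have hcard : n.primeFactors.card = 7 := by
    rw [card_pf_eq_omega, (cardDistinctFactors_eq_cardFactors_iff_squarefree hn.ne').mpr hsq, hΩ]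
  rw [keyA n 3 hn hsq key, hcard]
  norm_num [Finset.sum_range_succ, Nat.choose]

end Helpers

open ArithmeticFunction in
theorem moebius_sum_below_sqrt (n : ℕ) (hn : 0 < n) (hsq : Squarefree n) :
    (ArithmeticFunction.moebius n = 1 → Smu n = 0) ∧
    (n.Prime → Smu n = 1) ∧
    ((∃ p : ℕ, p.Prime ∧ p ∣ n ∧ n < p ^ 2 ∧ p < n) → Smu n = 0) ∧
    (∀ p1 p2 p3 : ℕ, p1.Prime → p2.Prime → p3.Prime →
      p3 < p2 → p2 < p1 → n = p1 * p2 * p3 → p1 ^ 2 < n → Smu n = -2) ∧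
    (ArithmeticFunction.cardFactors n = 7 → n < n.minFac ^ 8 → Smu n = -20) := by
  refine ⟨fun h => partI n hn hsq h, fun h => partII n h, fun h => partIII n hn h,
    fun p1 p2 p3 h1 h2 h3 h32 h21 he hlt => partIV n hn hsq p1 p2 p3 h1 h2 h3 h32 h21 he hlt,
    fun h7 h8 => partV n hn hsq h7 h8⟩
end

section
/- Let n be a squarefree positive integer and set T(n) := 2·#{d : d | n, d squarefree, Ω(d) = 3, n < d² and d² < n·P⁻(d)}. Then: (i) if n = p1·p2·p3·p4 with primes p4 < p3 < p2 < p1 satisfying p1 < p2·p3·p4 and p2·p3 < p1, then T(n) = 2; (ii) if Ω(n) ≤ 3 then T(n) = 0; (iii) if n = p1·p2·p3·p4 with primes p4 < p3 < p2 < p1 satisfying p1 > p2·p3·p4 or p2·p3 > p1, then T(n) = 0; (iv) if Ω(n) = 6 then T(n) ≤ 20; (v) if Ω(n) = 7 and P⁻(n)^8 > n, then T(n) = 0. -/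
open scoped Classical

open ArithmeticFunction

private lemma list_pow_le (b : ℕ) : ∀ l : List ℕ, (∀ p ∈ l, b ≤ p) → b ^ l.length ≤ l.prod
  | [], _ => le_refl 1
  | (x :: t), h => by
      simp only [List.length_cons, List.prod_cons, pow_succ]
      rw [mul_comm]
      exact Nat.mul_le_mul (h x List.mem_cons_self)
        (list_pow_le b t fun p hp => h p (List.mem_cons_of_mem _ hp))

private lemma pow_omega_le {b m : ℕ} (hm : m ≠ 0) (hb : ∀ p, p.Prime → p ∣ m → b ≤ p) :
    b ^ (cardFactors m) ≤ m := by
  rw [cardFactors_apply]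
  calc b ^ m.primeFactorsList.length ≤ m.primeFactorsList.prod :=
        list_pow_le b _ fun p hp =>
          hb p (Nat.prime_of_mem_primeFactorsList hp) (Nat.dvd_of_mem_primeFactorsList hp)
    _ = m := Nat.prod_primeFactorsList hm

private lemma omega_eq_card {d : ℕ} (hsq : Squarefree d) :
    d.primeFactors.card = cardFactors d := by
  rw [← (cardDistinctFactors_eq_cardFactors_iff_squarefree hsq.ne_zero).2 hsq,
    cardDistinctFactors_apply, Nat.primeFactors, List.card_toFinset]

private lemma card_filter_omega (n k : ℕ) (hn : 0 < n) (hsq : Squarefree n) :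
    (n.divisors.filter fun d => cardFactors d = k).card = (n.primeFactors.card).choose k := by
  rw [← Finset.card_powersetCard]
  apply Finset.card_bij (fun d _ => d.primeFactors)
  · intro d hd
    simp only [Finset.mem_filter, Nat.mem_divisors] at hd
    obtain ⟨⟨hdvd, _⟩, hΩ⟩ := hd
    have hsd : Squarefree d := hsq.squarefree_of_dvd hdvd
    rw [Finset.mem_powersetCard]
    exact ⟨Nat.primeFactors_mono hdvd hn.ne', by rw [omega_eq_card hsd, hΩ]⟩
  · intro d hd e he hde
    simp only [Finset.mem_filter, Nat.mem_divisors] at hd he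
    have hsd : Squarefree d := hsq.squarefree_of_dvd hd.1.1
    have hse : Squarefree e := hsq.squarefree_of_dvd he.1.1
    rw [← Nat.prod_primeFactors_of_squarefree hsd, ← Nat.prod_primeFactors_of_squarefree hse, hde]
  · intro s hs
    rw [Finset.mem_powersetCard] at hs
    obtain ⟨hsub, hcard⟩ := hs
    refine ⟨∏ p ∈ s, p, ?_, ?_⟩
    · have hdvd : (∏ p ∈ s, p) ∣ n :=
        dvd_trans (Finset.prod_dvd_prod_of_subset s n.primeFactors (fun p => p) hsub)
          (Nat.prod_primeFactors_dvd n)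
      have hpf : (∏ p ∈ s, p).primeFactors = s :=
        Nat.primeFactors_prod fun p hp => Nat.prime_of_mem_primeFactors (hsub hp)
      have hsd : Squarefree (∏ p ∈ s, p) := hsq.squarefree_of_dvd hdvd
      simp only [Finset.mem_filter, Nat.mem_divisors]
      exact ⟨⟨hdvd, hn.ne'⟩, by rw [← omega_eq_card hsd, hpf, hcard]⟩
    · exact Nat.primeFactors_prod fun p hp => Nat.prime_of_mem_primeFactors (hsub hp)

private lemma minFac_triple {a b c : ℕ} (ha : a.Prime) (hb : b.Prime) (hc : c.Prime)
    (h1 : c ≤ a) (h2 : c ≤ b) : (a * b * c).minFac = c := by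
  have h2a := ha.two_le
  have h2b := hb.two_le
  have h2c := hc.two_le
  have hne : a * b * c ≠ 1 := by
    have h4 : 2 * 2 ≤ a * b := Nat.mul_le_mul h2a h2b
    have h8 : 2 * 2 * 2 ≤ a * b * c := Nat.mul_le_mul h4 h2c
    omega
  have hp := Nat.minFac_prime hne
  have hle : (a * b * c).minFac ≤ c := Nat.minFac_le_of_dvd hc.two_le ⟨a * b, by ring⟩
  have hcase : (a * b * c).minFac = a ∨ (a * b * c).minFac = b ∨ (a * b * c).minFac = c := by
    rcases hp.dvd_mul.mp (Nat.minFac_dvd (a * b * c)) with h' | h'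
    · rcases hp.dvd_mul.mp h' with h'' | h''
      · exact Or.inl ((Nat.prime_dvd_prime_iff_eq hp ha).mp h'')
      · exact Or.inr (Or.inl ((Nat.prime_dvd_prime_iff_eq hp hb).mp h''))
    · exact Or.inr (Or.inr ((Nat.prime_dvd_prime_iff_eq hp hc).mp h'))
  omega

/-- `Tcount n = 2 · #{d ∣ n : d squarefree, Ω(d) = 3, √n < d < √(n·P⁻(d))}`, where the
condition `√n < d < √(n·P⁻(d))` is rendered as `n < d²` and `d² < n·P⁻(d)`. -/
noncomputable def Tcount (n : ℕ) : ℤ :=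
  2 * ((n.divisors.filter (fun d => Squarefree d ∧
    ArithmeticFunction.cardFactors d = 3 ∧ n < d ^ 2 ∧ d ^ 2 < n * d.minFac)).card : ℤ)

theorem count_special_divisors (n : ℕ) (hn : 0 < n) (hsq : Squarefree n) :
    (∀ p1 p2 p3 p4 : ℕ, p1.Prime → p2.Prime → p3.Prime → p4.Prime →
      p4 < p3 → p3 < p2 → p2 < p1 → n = p1 * p2 * p3 * p4 →
      p1 < p2 * p3 * p4 → p2 * p3 < p1 → Tcount n = 2) ∧
    (ArithmeticFunction.cardFactors n ≤ 3 → Tcount n = 0) ∧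
    (∀ p1 p2 p3 p4 : ℕ, p1.Prime → p2.Prime → p3.Prime → p4.Prime →
      p4 < p3 → p3 < p2 → p2 < p1 → n = p1 * p2 * p3 * p4 →
      (p2 * p3 * p4 < p1 ∨ p1 < p2 * p3) → Tcount n = 0) ∧
    (ArithmeticFunction.cardFactors n = 6 → Tcount n ≤ 20) ∧
    (ArithmeticFunction.cardFactors n = 7 → n < n.minFac ^ 8 → Tcount n = 0) := by
  set S := n.divisors.filter (fun d => Squarefree d ∧
    ArithmeticFunction.cardFactors d = 3 ∧ n < d ^ 2 ∧ d ^ 2 < n * d.minFac) with hS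
  have hmem : ∀ d ∈ S, d ∣ n ∧ Squarefree d ∧ cardFactors d = 3 ∧ n < d ^ 2 ∧
      d ^ 2 < n * d.minFac ∧ (n / d) * d = n ∧ cardFactors n = cardFactors (n / d) + 3 := by
    intro d hd
    simp only [hS, Finset.mem_filter, Nat.mem_divisors] at hd
    obtain ⟨⟨hdvd, _⟩, hsd, hΩ, h1, h2⟩ := hd
    have hd0 : d ≠ 0 := hsd.ne_zero
    have hcd : (n / d) * d = n := Nat.div_mul_cancel hdvd
    have hc0 : n / d ≠ 0 := by
      intro h; rw [h] at hcd; simp at hcd; omega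
    refine ⟨hdvd, hsd, hΩ, h1, h2, hcd, ?_⟩
    have key : cardFactors ((n / d) * d) = cardFactors (n / d) + cardFactors d :=
      cardFactors_mul hc0 hd0
    rw [hcd, hΩ] at key
    exact key
  refine ⟨?_, ?_, ?_, ?_, ?_⟩
  · -- part (i)
    intro p1 p2 p3 p4 hp1 hp2 hp3 hp4 h43 h32 h21 hneq hlt1 hlt2
    have t1 := hp1.two_le; have t2 := hp2.two_le; have t3 := hp3.two_le; have t4 := hp4.two_le
    have hΩn : cardFactors n = 4 := by
      rw [hneq, cardFactors_mul (by positivity) (by positivity),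
        cardFactors_mul (by positivity) (by positivity),
        cardFactors_mul (by positivity) (by positivity),
        cardFactors_apply_prime hp1, cardFactors_apply_prime hp2,
        cardFactors_apply_prime hp3, cardFactors_apply_prime hp4]
    have hSeq : S = {p2 * p3 * p4} := by
      apply Finset.eq_singleton_iff_unique_mem.mpr
      constructor
      · have hdvd : p2 * p3 * p4 ∣ n := ⟨p1, by rw [hneq]; ring⟩
        have hsd : Squarefree (p2 * p3 * p4) := hsq.squarefree_of_dvd hdvd
        have hmf : (p2 * p3 * p4).minFac = p4 := minFac_triple hp2 hp3 hp4 (by omega) (by omega)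
        simp only [hS, Finset.mem_filter, Nat.mem_divisors]
        refine ⟨⟨hdvd, hn.ne'⟩, hsd, ?_, ?_, ?_⟩
        · rw [cardFactors_mul (by positivity) (by positivity),
            cardFactors_mul (by positivity) (by positivity),
            cardFactors_apply_prime hp2, cardFactors_apply_prime hp3,
              cardFactors_apply_prime hp4]
        · rw [hneq]
          calc p1 * p2 * p3 * p4 = p1 * (p2 * p3 * p4) := by ring
            _ < (p2 * p3 * p4) * (p2 * p3 * p4) :=
                mul_lt_mul_of_pos_right hlt1 (by positivity)
            _ = (p2 * p3 * p4) ^ 2 := (pow_two _).symm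
        · rw [hmf, hneq]
          calc (p2 * p3 * p4) ^ 2 = (p2 * p3) * (p2 * p3 * p4 * p4) := by ring
            _ < p1 * (p2 * p3 * p4 * p4) := mul_lt_mul_of_pos_right hlt2 (by positivity)
            _ = p1 * p2 * p3 * p4 * p4 := by ring
      · intro d hd
        obtain ⟨hdvd, hsd, hΩ, h1, h2, hcd, hΩn'⟩ := hmem d hd
        set c := n / d with hc
        have hcprime : c.Prime := by
          rw [← cardFactors_eq_one_iff_prime]; omega
        have hcdvd : c ∣ n := ⟨d, hcd.symm⟩
        have hcases : c = p1 ∨ c = p2 ∨ c = p3 ∨ c = p4 := by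
          have hx : c ∣ p1 * p2 * p3 * p4 := hneq ▸ hcdvd
          rcases hcprime.dvd_mul.mp hx with h' | h'
          · rcases hcprime.dvd_mul.mp h' with h'' | h''
            · rcases hcprime.dvd_mul.mp h'' with h3 | h3
              · exact Or.inl ((Nat.prime_dvd_prime_iff_eq hcprime hp1).mp h3)
              · exact Or.inr (Or.inl ((Nat.prime_dvd_prime_iff_eq hcprime hp2).mp h3))
            · exact Or.inr (Or.inr (Or.inl ((Nat.prime_dvd_prime_iff_eq hcprime hp3).mp h'')))
          · exact Or.inr (Or.inr (Or.inr ((Nat.prime_dvd_prime_iff_eq hcprime hp4).mp h')))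
        rcases hcases with he | he | he | he
        · exact Nat.eq_of_mul_eq_mul_left (show 0 < p1 by omega)
            (by calc p1 * d = c * d := by rw [he]
                  _ = n := hcd
                  _ = p1 * (p2 * p3 * p4) := by rw [hneq]; ring)
        · exfalso
          have hde : d = p1 * p3 * p4 :=
            Nat.eq_of_mul_eq_mul_left (show 0 < p2 by omega)
              (by calc p2 * d = c * d := by rw [he]
                    _ = n := hcd
                    _ = p2 * (p1 * p3 * p4) := by rw [hneq]; ring)
          have hmf : d.minFac = p4 := by
            rw [hde]; exact minFac_triple hp1 hp3 hp4 (by omega) (by omega)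
          rw [hmf, hde, hneq] at h2
          have hkey : p1 * p3 < p2 := by
            apply Nat.lt_of_mul_lt_mul_right (a := p1 * p3 * p4 * p4)
            calc (p1 * p3) * (p1 * p3 * p4 * p4) = (p1 * p3 * p4) ^ 2 := by ring
              _ < p1 * p2 * p3 * p4 * p4 := h2
              _ = p2 * (p1 * p3 * p4 * p4) := by ring
          have : p1 ≤ p1 * p3 := Nat.le_mul_of_pos_right p1 (by omega)
          omega
        · exfalso
          have hde : d = p1 * p2 * p4 :=
            Nat.eq_of_mul_eq_mul_left (show 0 < p3 by omega)
              (by calc p3 * d = c * d := by rw [he]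
                    _ = n := hcd
                    _ = p3 * (p1 * p2 * p4) := by rw [hneq]; ring)
          have hmf : d.minFac = p4 := by
            rw [hde]; exact minFac_triple hp1 hp2 hp4 (by omega) (by omega)
          rw [hmf, hde, hneq] at h2
          have hkey : p1 * p2 < p3 := by
            apply Nat.lt_of_mul_lt_mul_right (a := p1 * p2 * p4 * p4)
            calc (p1 * p2) * (p1 * p2 * p4 * p4) = (p1 * p2 * p4) ^ 2 := by ring
              _ < p1 * p2 * p3 * p4 * p4 := h2
              _ = p3 * (p1 * p2 * p4 * p4) := by ring
          have : p1 ≤ p1 * p2 := Nat.le_mul_of_pos_right p1 (by omega)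
          omega
        · exfalso
          have hde : d = p1 * p2 * p3 :=
            Nat.eq_of_mul_eq_mul_left (show 0 < p4 by omega)
              (by calc p4 * d = c * d := by rw [he]
                    _ = n := hcd
                    _ = p4 * (p1 * p2 * p3) := by rw [hneq]; ring)
          have hmf : d.minFac = p3 := by
            rw [hde]; exact minFac_triple hp1 hp2 hp3 (by omega) (by omega)
          rw [hmf, hde, hneq] at h2
          have hkey : p1 * p2 < p4 := by
            apply Nat.lt_of_mul_lt_mul_right (a := p1 * p2 * p3 * p3)
            calc (p1 * p2) * (p1 * p2 * p3 * p3) = (p1 * p2 * p3) ^ 2 := by ring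
              _ < p1 * p2 * p3 * p4 * p3 := h2
              _ = p4 * (p1 * p2 * p3 * p3) := by ring
          have : p1 ≤ p1 * p2 := Nat.le_mul_of_pos_right p1 (by omega)
          omega
    rw [Tcount, ← hS, hSeq]; simp
  · -- part (ii)
    intro hΩn
    have hSe : S = ∅ := by
      apply Finset.eq_empty_iff_forall_notMem.mpr
      intro d hd
      obtain ⟨hdvd, hsd, hΩ, h1, h2, hcd, hΩn'⟩ := hmem d hd
      have hc1 : n / d = 1 := by
        have h0 : cardFactors (n / d) = 0 := by omega
        have hc0 : n / d ≠ 0 := by intro h; rw [h] at hcd; simp at hcd; omega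
        have hprod := Nat.prod_primeFactorsList hc0
        rw [cardFactors_apply, List.length_eq_zero_iff] at h0
        rw [h0] at hprod; simpa using hprod.symm
      rw [hc1, one_mul] at hcd
      rw [hcd] at h2
      have hnn : n * n.minFac ≤ n * n := Nat.mul_le_mul_left n (Nat.minFac_le hn)
      rw [pow_two] at h2
      omega
    rw [Tcount, ← hS, hSe]; simp
  · -- part (iii)
    intro p1 p2 p3 p4 hp1 hp2 hp3 hp4 h43 h32 h21 hneq hor
    have t1 := hp1.two_le; have t2 := hp2.two_le; have t3 := hp3.two_le; have t4 := hp4.two_le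
    have hΩn : cardFactors n = 4 := by
      rw [hneq, cardFactors_mul (by positivity) (by positivity),
        cardFactors_mul (by positivity) (by positivity),
        cardFactors_mul (by positivity) (by positivity),
        cardFactors_apply_prime hp1, cardFactors_apply_prime hp2,
        cardFactors_apply_prime hp3, cardFactors_apply_prime hp4]
    have hSe : S = ∅ := by
      apply Finset.eq_empty_iff_forall_notMem.mpr
      intro d hd
      obtain ⟨hdvd, hsd, hΩ, h1, h2, hcd, hΩn'⟩ := hmem d hd
      set c := n / d with hc
      have hcprime : c.Prime := by
        rw [← cardFactors_eq_one_iff_prime]; omega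
      have hcdvd : c ∣ n := ⟨d, hcd.symm⟩
      have hcases : c = p1 ∨ c = p2 ∨ c = p3 ∨ c = p4 := by
        have hx : c ∣ p1 * p2 * p3 * p4 := hneq ▸ hcdvd
        rcases hcprime.dvd_mul.mp hx with h' | h'
        · rcases hcprime.dvd_mul.mp h' with h'' | h''
          · rcases hcprime.dvd_mul.mp h'' with h3 | h3
            · exact Or.inl ((Nat.prime_dvd_prime_iff_eq hcprime hp1).mp h3)
            · exact Or.inr (Or.inl ((Nat.prime_dvd_prime_iff_eq hcprime hp2).mp h3))
          · exact Or.inr (Or.inr (Or.inl ((Nat.prime_dvd_prime_iff_eq hcprime hp3).mp h'')))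
        · exact Or.inr (Or.inr (Or.inr ((Nat.prime_dvd_prime_iff_eq hcprime hp4).mp h')))
      rcases hcases with he | he | he | he
      · -- c = p1, d = p2*p3*p4
        have hde : d = p2 * p3 * p4 :=
          Nat.eq_of_mul_eq_mul_left (show 0 < p1 by omega)
            (by calc p1 * d = c * d := by rw [he]
                  _ = n := hcd
                  _ = p1 * (p2 * p3 * p4) := by rw [hneq]; ring)
        have hmf : d.minFac = p4 := by
          rw [hde]; exact minFac_triple hp2 hp3 hp4 (by omega) (by omega)
        rcases hor with hA | hB
        · rw [hde, hneq] at h1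
          have hkey : p1 < p2 * p3 * p4 := by
            apply Nat.lt_of_mul_lt_mul_right (a := p2 * p3 * p4)
            calc p1 * (p2 * p3 * p4) = p1 * p2 * p3 * p4 := by ring
              _ < (p2 * p3 * p4) ^ 2 := h1
              _ = (p2 * p3 * p4) * (p2 * p3 * p4) := pow_two _
          omega
        · rw [hmf, hde, hneq] at h2
          have hkey : p2 * p3 < p1 := by
            apply Nat.lt_of_mul_lt_mul_right (a := p2 * p3 * p4 * p4)
            calc (p2 * p3) * (p2 * p3 * p4 * p4) = (p2 * p3 * p4) ^ 2 := by ring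
              _ < p1 * p2 * p3 * p4 * p4 := h2
              _ = p1 * (p2 * p3 * p4 * p4) := by ring
          omega
      · have hde : d = p1 * p3 * p4 :=
          Nat.eq_of_mul_eq_mul_left (show 0 < p2 by omega)
            (by calc p2 * d = c * d := by rw [he]
                  _ = n := hcd
                  _ = p2 * (p1 * p3 * p4) := by rw [hneq]; ring)
        have hmf : d.minFac = p4 := by
          rw [hde]; exact minFac_triple hp1 hp3 hp4 (by omega) (by omega)
        rw [hmf, hde, hneq] at h2
        have hkey : p1 * p3 < p2 := by
          apply Nat.lt_of_mul_lt_mul_right (a := p1 * p3 * p4 * p4)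
          calc (p1 * p3) * (p1 * p3 * p4 * p4) = (p1 * p3 * p4) ^ 2 := by ring
            _ < p1 * p2 * p3 * p4 * p4 := h2
            _ = p2 * (p1 * p3 * p4 * p4) := by ring
        have : p1 ≤ p1 * p3 := Nat.le_mul_of_pos_right p1 (by omega)
        omega
      · have hde : d = p1 * p2 * p4 :=
          Nat.eq_of_mul_eq_mul_left (show 0 < p3 by omega)
            (by calc p3 * d = c * d := by rw [he]
                  _ = n := hcd
                  _ = p3 * (p1 * p2 * p4) := by rw [hneq]; ring)
        have hmf : d.minFac = p4 := by
          rw [hde]; exact minFac_triple hp1 hp2 hp4 (by omega) (by omega)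
        rw [hmf, hde, hneq] at h2
        have hkey : p1 * p2 < p3 := by
          apply Nat.lt_of_mul_lt_mul_right (a := p1 * p2 * p4 * p4)
          calc (p1 * p2) * (p1 * p2 * p4 * p4) = (p1 * p2 * p4) ^ 2 := by ring
            _ < p1 * p2 * p3 * p4 * p4 := h2
            _ = p3 * (p1 * p2 * p4 * p4) := by ring
        have : p1 ≤ p1 * p2 := Nat.le_mul_of_pos_right p1 (by omega)
        omega
      · have hde : d = p1 * p2 * p3 :=
          Nat.eq_of_mul_eq_mul_left (show 0 < p4 by omega)
            (by calc p4 * d = c * d := by rw [he]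
                  _ = n := hcd
                  _ = p4 * (p1 * p2 * p3) := by rw [hneq]; ring)
        have hmf : d.minFac = p3 := by
          rw [hde]; exact minFac_triple hp1 hp2 hp3 (by omega) (by omega)
        rw [hmf, hde, hneq] at h2
        have hkey : p1 * p2 < p4 := by
          apply Nat.lt_of_mul_lt_mul_right (a := p1 * p2 * p3 * p3)
          calc (p1 * p2) * (p1 * p2 * p3 * p3) = (p1 * p2 * p3) ^ 2 := by ring
            _ < p1 * p2 * p3 * p4 * p3 := h2
            _ = p4 * (p1 * p2 * p3 * p3) := by ring
        have : p1 ≤ p1 * p2 := Nat.le_mul_of_pos_right p1 (by omega)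
        omega
    rw [Tcount, ← hS, hSe]; simp
  · -- part (iv)
    intro hΩn
    set B := n.divisors.filter (fun d => cardFactors d = 3 ∧ d ^ 2 < n) with hB
    set C := n.divisors.filter (fun d => cardFactors d = 3) with hC
    have hCcard : C.card = 20 := by
      rw [hC, card_filter_omega n 3 hn hsq, omega_eq_card hsq, hΩn]; decide
    have hSB : S.card ≤ B.card := by
      apply Finset.card_le_card_of_injOn (fun d => n / d)
      · intro d hd
        obtain ⟨hdvd, hsd, hΩ, h1, h2, hcd, hΩn'⟩ := hmem d hd
        simp only [hB, Finset.mem_coe, Finset.mem_filter, Nat.mem_divisors]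
        refine ⟨⟨⟨d, hcd.symm⟩, hn.ne'⟩, by omega, ?_⟩
        by_contra hcon
        push_neg at hcon
        have habs : n * n < n * n := by
          calc n * n < n * d ^ 2 := mul_lt_mul_of_pos_left h1 hn
            _ ≤ (n / d) ^ 2 * d ^ 2 := Nat.mul_le_mul_right _ hcon
            _ = n ^ 2 := by rw [← mul_pow, hcd]
            _ = n * n := pow_two n
        exact lt_irrefl _ habs
      · intro d hd e he hde
        simp only [hS, Finset.coe_filter, Set.mem_setOf_eq, Nat.mem_divisors] at hd he
        have hde' : n / d = n / e := hde
        have h1 : n / (n / d) = d := Nat.div_div_self hd.1.1 hn.ne'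
        have h2 : n / (n / e) = e := Nat.div_div_self he.1.1 hn.ne'
        rw [← h1, ← h2, hde']
    have hdisj : Disjoint S B := by
      rw [Finset.disjoint_left]
      intro d hdS hdB
      simp only [hS, Finset.mem_filter] at hdS
      simp only [hB, Finset.mem_filter] at hdB
      omega
    have hsub : S ∪ B ⊆ C := by
      intro d hd
      rcases Finset.mem_union.mp hd with h | h
      · simp only [hS, Finset.mem_filter] at h
        simp only [hC, Finset.mem_filter]
        exact ⟨h.1, h.2.2.1⟩
      · simp only [hB, Finset.mem_filter] at h
        simp only [hC, Finset.mem_filter]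
        exact ⟨h.1, h.2.1⟩
    have hle := Finset.card_le_card hsub
    rw [Finset.card_union_of_disjoint hdisj, hCcard] at hle
    have hcard : S.card ≤ 10 := by omega
    rw [Tcount, ← hS]
    have hz : (S.card : ℤ) ≤ 10 := by exact_mod_cast hcard
    linarith
  · -- part (v)
    intro hΩn hlt
    have hSe : S = ∅ := by
      apply Finset.eq_empty_iff_forall_notMem.mpr
      intro d hd
      obtain ⟨hdvd, hsd, hΩ, h1, h2, hcd, hΩn'⟩ := hmem d hd
      set c := n / d with hc
      have hc0 : c ≠ 0 := by intro h; rw [h] at hcd; simp at hcd; omega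
      have hΩc : cardFactors c = 4 := by omega
      have hple : n.minFac ^ 4 ≤ c := by
        have hx := pow_omega_le hc0 (fun p hp hpdvd =>
          Nat.minFac_le_of_dvd hp.two_le (hpdvd.trans ⟨d, hcd.symm⟩))
        rwa [hΩc] at hx
      have hnc : n < c ^ 2 :=
        calc n < n.minFac ^ 8 := hlt
          _ = (n.minFac ^ 4) ^ 2 := by ring
          _ ≤ c ^ 2 := Nat.pow_le_pow_left hple 2
      have habs : n * n < n * n := by
        calc n * n < c ^ 2 * d ^ 2 := Nat.mul_lt_mul_of_lt_of_lt hnc h1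
          _ = n ^ 2 := by rw [← mul_pow, hcd]
          _ = n * n := pow_two n
      exact lt_irrefl _ habs
    rw [Tcount, ← hS, hSe]; simp
end
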